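/- (Remainder Lemma, determinant part.) Assume the avoidance hypothesis. Then for every u ∈ ℝ² with ‖u‖ ≤ 1, the determinant det((J_h(x+Eu) − J_h(x))·E) is nonnegative, and it equals 0 if and only if c·u₁ + d·u₂ = 0. -/

import Mathlib

noncomputable section

/-- Matrix–vector multiplication, viewed as a map on the Euclidean plane. -/
def mv (M : Matrix (Fin 2) (Fin 2) ℝ) (u : EuclideanSpace ℝ (Fin 2)) :
    EuclideanSpace ℝ (Fin 2) := WithLp.toLp 2 (M.mulVec u)

/-- Range `r(p) = √((p₁−a)² + (p₂−b)²)` to the sensor located at `(a, b)`. -/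
def rr (a b : ℝ) (p : EuclideanSpace ℝ (Fin 2)) : ℝ :=
  Real.sqrt ((p 0 - a) ^ 2 + (p 1 - b) ^ 2)

/-- Bearing `θ(p)`: polar angle in `(−π, π]` of the complex number `(p₁−a) + i(p₂−b)`. -/
def theta (a b : ℝ) (p : EuclideanSpace ℝ (Fin 2)) : ℝ :=
  Complex.arg ⟨p 0 - a, p 1 - b⟩

/-- Jacobian matrix of the range–bearing measurement map at `p`. -/
def Jh (a b : ℝ) (p : EuclideanSpace ℝ (Fin 2)) : Matrix (Fin 2) (Fin 2) ℝ :=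
  !![(p 0 - a) / rr a b p, (p 1 - b) / rr a b p;
     -(p 1 - b) / (rr a b p) ^ 2, (p 0 - a) / (rr a b p) ^ 2]

/-- The range–bearing measurement map `h(p) = (r(p), θ(p))`. -/
def hMeas (a b : ℝ) (p : EuclideanSpace ℝ (Fin 2)) : EuclideanSpace ℝ (Fin 2) :=
  WithLp.toLp 2 ![rr a b p, theta a b p]

/-- The linearization remainder `g(u) = h(x + Eu) − h(x) − J_h(x)·(Eu)`. -/
def gRem (a b : ℝ) (x : EuclideanSpace ℝ (Fin 2)) (E : Matrix (Fin 2) (Fin 2) ℝ)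
    (u : EuclideanSpace ℝ (Fin 2)) : EuclideanSpace ℝ (Fin 2) :=
  hMeas a b (x + mv E u) - hMeas a b x - mv (Jh a b x) (mv E u)

set_option maxHeartbeats 2000000

/-- **Remainder Lemma, determinant part.** Under the avoidance hypothesis, for every
`u` with `‖u‖ ≤ 1` the determinant of `(J_h(x+Eu) − J_h(x))·E` is nonnegative, and it
vanishes iff `c·u₁ + d·u₂ = 0`. -/
theorem det_jacobianDiff_nonneg_and_eq_zero_iff
    (a b : ℝ) (x : EuclideanSpace ℝ (Fin 2)) (E : Matrix (Fin 2) (Fin 2) ℝ)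
    (hE : 0 < E.det)
    (havoid : ∀ u : EuclideanSpace ℝ (Fin 2), ‖u‖ ≤ 1 →
      ¬((x + mv E u) 0 ≤ a ∧ (x + mv E u) 1 = b))
    (c d : ℝ)
    (hc : c = E 0 0 * (x 1 - b) - E 1 0 * (x 0 - a))
    (hd : d = E 0 1 * (x 1 - b) - E 1 1 * (x 0 - a)) :
    ∀ u : EuclideanSpace ℝ (Fin 2), ‖u‖ ≤ 1 →
      0 ≤ ((Jh a b (x + mv E u) - Jh a b x) * E).det ∧
        (((Jh a b (x + mv E u) - Jh a b x) * E).det = 0 ↔ c * u 0 + d * u 1 = 0) := by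
  intro u hu
  have hx0 := havoid 0 (by simp)
  have hmv0 : mv E (0 : EuclideanSpace ℝ (Fin 2)) = 0 := by
    simp [mv, Matrix.mulVec_zero]
  rw [hmv0, add_zero] at hx0
  set q : EuclideanSpace ℝ (Fin 2) := x + mv E u with hqdef
  have hqc : ∀ i, q i = x i + (mv E u) i := fun i => rfl
  have hmv0c : (mv E u) 0 = E 0 0 * u 0 + E 0 1 * u 1 := by
    simp [mv, Matrix.mulVec, dotProduct, Fin.sum_univ_two]
  have hmv1c : (mv E u) 1 = E 1 0 * u 0 + E 1 1 * u 1 := by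
    simp [mv, Matrix.mulVec, dotProduct, Fin.sum_univ_two]
  set A := x 0 - a with hA
  set B := x 1 - b with hB
  set C := q 0 - a with hC
  set D := q 1 - b with hD
  clear_value A B C D q
  have hCA : C = A + (E 0 0 * u 0 + E 0 1 * u 1) := by
    rw [hC, hA, hqc 0, hmv0c]; ring
  have hDB : D = B + (E 1 0 * u 0 + E 1 1 * u 1) := by
    rw [hD, hB, hqc 1, hmv1c]; ring
  have hABpos : 0 < A ^ 2 + B ^ 2 := by
    rcases lt_or_eq_of_le (by positivity : (0:ℝ) ≤ A ^ 2 + B ^ 2) with h | h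
    · exact h
    · exfalso
      have hA0 : A = 0 := by nlinarith [sq_nonneg A, sq_nonneg B]
      have hB0 : B = 0 := by nlinarith [sq_nonneg A, sq_nonneg B]
      have e0 : x 0 - a = 0 := by rw [← hA]; exact hA0
      have e1 : x 1 - b = 0 := by rw [← hB]; exact hB0
      exact hx0 ⟨by linarith, by linarith⟩
  have hq' := havoid u hu
  rw [← hqdef] at hq'
  have hCDpos : 0 < C ^ 2 + D ^ 2 := by
    rcases lt_or_eq_of_le (by positivity : (0:ℝ) ≤ C ^ 2 + D ^ 2) with h | h
    · exact h
    · exfalso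
      have hC0 : C = 0 := by nlinarith [sq_nonneg C, sq_nonneg D]
      have hD0 : D = 0 := by nlinarith [sq_nonneg C, sq_nonneg D]
      have e0 : q 0 - a = 0 := by rw [← hC]; exact hC0
      have e1 : q 1 - b = 0 := by rw [← hD]; exact hD0
      exact hq' ⟨by linarith, by linarith⟩
  set r := Real.sqrt (A ^ 2 + B ^ 2) with hrdef
  set s := Real.sqrt (C ^ 2 + D ^ 2) with hsdef
  have hr : 0 < r := Real.sqrt_pos.mpr hABpos
  have hs : 0 < s := Real.sqrt_pos.mpr hCDpos
  have hr2 : r ^ 2 = A ^ 2 + B ^ 2 := Real.sq_sqrt hABpos.le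
  have hs2 : s ^ 2 = C ^ 2 + D ^ 2 := Real.sq_sqrt hCDpos.le
  have hrrx : rr a b x = r := by
    rw [hrdef]; unfold rr; rw [hA, hB]
  have hrrq : rr a b q = s := by
    rw [hsdef]; unfold rr; rw [hC, hD]
  set t := A * C + B * D with ht
  have hdetJ : (Jh a b q - Jh a b x).det
      = (r + s) * (r * s - t) / (r ^ 2 * s ^ 2) := by
    unfold Jh
    rw [hrrx, hrrq, ← hA, ← hB, ← hC, ← hD]
    rw [Matrix.det_fin_two]
    simp only [Matrix.sub_apply, Matrix.cons_val', Matrix.cons_val_zero, Matrix.cons_val_one,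
      Matrix.head_cons, Matrix.empty_val', Matrix.cons_val_fin_one, Matrix.head_fin_const,
      Matrix.of_apply]
    field_simp
    linear_combination (-r^3) * hs2 + (-s^3) * hr2
  have hdet : ((Jh a b q - Jh a b x) * E).det
      = ((r + s) * (r * s - t) / (r ^ 2 * s ^ 2)) * E.det := by
    rw [Matrix.det_mul, hdetJ]
  have hcauchy : t ≤ r * s := by
    nlinarith [sq_nonneg (A * D - B * C), hr2, hs2, mul_pos hr hs, sq_nonneg (r*s - t), sq_nonneg (r*s + t)]
  have hcross : A * D - B * C = -(c * u 0 + d * u 1) := by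
    rw [hCA, hDB, hc, hd]; ring
  -- anti-parallel case is excluded
  have hnoanti : r * s ≠ -t := by
    intro hneg
    have hx : A * D = B * C := by
      nlinarith [hr2, hs2, sq_nonneg (A * D - B * C)]
    have h1 : s * (A * s + r * C) = 0 := by
      have h1' : A * s ^ 2 = C * t := by
        rw [hs2, ht]; linear_combination D * hx
      have hneg' : t = -(r * s) := by linarith [hneg]
      linear_combination h1' + C * hneg'
    have h2 : s * (B * s + r * D) = 0 := by
      have h2' : B * s ^ 2 = D * t := by
        rw [hs2, ht]; linear_combination (-C) * hx
      have hneg' : t = -(r * s) := by linarith [hneg]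
      linear_combination h2' + D * hneg'
    have hAs : A * s + r * C = 0 := by
      rcases mul_eq_zero.mp h1 with h | h
      · exact absurd h hs.ne'
      · exact h
    have hBs : B * s + r * D = 0 := by
      rcases mul_eq_zero.mp h2 with h | h
      · exact absurd h hs.ne'
      · exact h
    set k : ℝ := r / (r + s) with hk
    have hrs : 0 < r + s := by linarith
    have hk0 : 0 ≤ k := by positivity
    have hk1 : k ≤ 1 := by
      rw [hk, div_le_one hrs]; linarith
    have hnormk : ‖k • u‖ ≤ 1 := by
      rw [norm_smul, Real.norm_eq_abs, abs_of_nonneg hk0]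
      calc k * ‖u‖ ≤ 1 * 1 := by
            apply mul_le_mul hk1 hu (norm_nonneg u) zero_le_one
        _ = 1 := by ring
    apply havoid (k • u) hnormk
    have hsmul : ∀ i : Fin 2, mv E (k • u) i = k * mv E u i := by
      intro i
      have hki : ∀ j : Fin 2, (k • u) j = k * u j := fun j => rfl
      fin_cases i <;>
        simp [mv, Matrix.mulVec, dotProduct, Fin.sum_univ_two, hki] <;> ring
    have hcoord0 : (x + mv E (k • u)) 0 = x 0 + k * (mv E u) 0 := by
      show x 0 + mv E (k • u) 0 = x 0 + k * (mv E u) 0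
      rw [hsmul 0]
    have hcoord1 : (x + mv E (k • u)) 1 = x 1 + k * (mv E u) 1 := by
      show x 1 + mv E (k • u) 1 = x 1 + k * (mv E u) 1
      rw [hsmul 1]
    have hmvC : (mv E u) 0 = C - A := by
      rw [hmv0c]; rw [hCA]; ring
    have hmvD : (mv E u) 1 = D - B := by
      rw [hmv1c]; rw [hDB]; ring
    have hxA : x 0 = A + a := by rw [hA]; ring
    have hxB : x 1 = B + b := by rw [hB]; ring
    constructor
    · rw [hcoord0, hmvC, hxA, hk]
      have hne : r + s ≠ 0 := by positivity
      have : A + a + r / (r + s) * (C - A) - a = (A * s + r * C) / (r + s) := by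
        field_simp; ring
      have h0 : A + a + r / (r + s) * (C - A) - a = 0 := by
        rw [this, hAs]; simp
      linarith [h0]
    · rw [hcoord1, hmvD, hxB, hk]
      have hne : r + s ≠ 0 := by positivity
      have : B + b + r / (r + s) * (D - B) - b = (B * s + r * D) / (r + s) := by
        field_simp; ring
      have h0 : B + b + r / (r + s) * (D - B) - b = 0 := by
        rw [this, hBs]; simp
      linarith [h0]
  -- main conclusion
  have hfac : 0 < (r + s) / (r ^ 2 * s ^ 2) * E.det := by positivity
  constructor
  · rw [hdet]
    have : (r + s) * (r * s - t) / (r ^ 2 * s ^ 2) * E.det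
        = ((r + s) / (r ^ 2 * s ^ 2) * E.det) * (r * s - t) := by ring
    rw [this]
    exact mul_nonneg hfac.le (by linarith [hcauchy])
  · rw [hdet]
    constructor
    · intro h
      have hrst : r * s - t = 0 := by
        have : ((r + s) / (r ^ 2 * s ^ 2) * E.det) * (r * s - t) = 0 := by
          rw [← h]; ring
        rcases mul_eq_zero.mp this with h' | h'
        · exact absurd h' hfac.ne'
        · exact h'
      have heq : r * s = t := by linarith
      have hsq : (A * D - B * C) ^ 2 = 0 := by
        linear_combination (r * s + t) * heq - s ^ 2 * hr2 - (A ^ 2 + B ^ 2) * hs2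
      have h0 : A * D - B * C = 0 := by
        exact pow_eq_zero_iff (by norm_num) |>.mp hsq
      rw [hcross] at h0
      linarith [h0]
    · intro h
      have h0 : A * D - B * C = 0 := by rw [hcross, h]; ring
      have hprod : (r * s - t) * (r * s + t) = 0 := by
        linear_combination s ^ 2 * hr2 + (A ^ 2 + B ^ 2) * hs2 + (A * D - B * C) * h0
      have hrst : r * s - t = 0 := by
        rcases mul_eq_zero.mp hprod with h' | h'
        · exact h'
        · exfalso; exact hnoanti (by linarith)
      rw [hrst]
      simp
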